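/- For every integer n ≥ 2 and every x ∈ ℂ, (x² + 4)·F(n−1) = ∏_{k=1}^{n} (x + 2i·cos((k−1)π/(n−1))), where F(k) denotes the k-th Fibonacci polynomial evaluated at x and i = √−1. Equivalently, whenever x² + 4 ≠ 0, F(n−1) = (1/(x²+4))·∏_{k=1}^{n} (x + 2i·cos((k−1)π/(n−1))). -/

import Mathlib

/-- Fibonacci polynomials evaluated at `x`:
`F 0 = 0`, `F 1 = 1`, `F (k+2) = x * F (k+1) + F k`. -/
def fibP (x : ℂ) : ℕ → ℂ
  | 0 => 0
  | 1 => 1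
  | (k + 2) => x * fibP x (k + 1) + fibP x k

open Polynomial Complex Finset

noncomputable def fibQ : ℕ → Polynomial ℂ
  | 0 => 0
  | 1 => 1
  | (k + 2) => Polynomial.X * fibQ (k + 1) + fibQ k

lemma fibQ_eval (x : ℂ) : ∀ m, (fibQ m).eval x = fibP x m := by
  intro m
  induction m using Nat.twoStepInduction with
  | zero => simp [fibQ, fibP]
  | one => simp [fibQ, fibP]
  | more k ih1 ih2 =>
    show (fibQ (k+2)).eval x = fibP x (k+2)
    simp [fibQ, fibP, ih1, ih2]

lemma fibQ_monic : ∀ m : ℕ, (fibQ (m+1)).Monic ∧ (fibQ (m+1)).natDegree = m := by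
  intro m
  induction m using Nat.twoStepInduction with
  | zero => constructor <;> simp [fibQ, monic_one]
  | one =>
    have : fibQ 2 = Polynomial.X := by simp [fibQ]
    rw [this]; exact ⟨monic_X, natDegree_X⟩
  | more k ih1 ih2 =>
    have h3 : fibQ (k+3) = Polynomial.X * fibQ (k+2) + fibQ (k+1) := rfl
    have hm : (Polynomial.X * fibQ (k+2)).Monic := monic_X.mul ih2.1
    have hdm : (Polynomial.X * fibQ (k+2)).natDegree = k + 2 := by
      rw [natDegree_mul X_ne_zero ih2.1.ne_zero, natDegree_X, ih2.2]; omega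
    have hlt : (fibQ (k+1)).degree < (Polynomial.X * fibQ (k+2)).degree := by
      rw [degree_eq_natDegree ih1.1.ne_zero, degree_eq_natDegree hm.ne_zero, hdm, ih1.2]
      exact_mod_cast by omega
    constructor
    · rw [h3]; exact hm.add_of_left hlt
    · rw [h3, natDegree_add_eq_left_of_degree_lt hlt, hdm]

lemma fibP_trig (θ : ℂ) : ∀ m : ℕ,
    Complex.sin θ * fibP (2 * Complex.I * Complex.cos θ) (m+1)
      = Complex.I ^ m * Complex.sin ((m+1 : ℕ) * θ) := by
  intro m
  induction m using Nat.twoStepInduction with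
  | zero => simp [fibP]
  | one =>
    have h2 : fibP (2*Complex.I*Complex.cos θ) 2 = 2*Complex.I*Complex.cos θ := by
      simp [fibP]
    rw [h2]
    have hs := Complex.sin_two_mul θ
    push_cast
    rw [hs]
    ring
  | more k e0 e1 =>
    have hx : fibP (2*Complex.I*Complex.cos θ) (k+3)
        = (2*Complex.I*Complex.cos θ) * fibP (2*Complex.I*Complex.cos θ) (k+2)
          + fibP (2*Complex.I*Complex.cos θ) (k+1) := rfl
    show Complex.sin θ * fibP (2*Complex.I*Complex.cos θ) (k+3) = _
    rw [hx]
    have hs3 : Complex.sin (((k:ℂ)+3)*θ)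
        = Complex.sin (((k:ℂ)+2)*θ) * Complex.cos θ
          + Complex.cos (((k:ℂ)+2)*θ) * Complex.sin θ := by
      rw [show ((k:ℂ)+3)*θ = ((k:ℂ)+2)*θ + θ by ring, Complex.sin_add]
    have hs1 : Complex.sin (((k:ℂ)+1)*θ)
        = Complex.sin (((k:ℂ)+2)*θ) * Complex.cos θ
          - Complex.cos (((k:ℂ)+2)*θ) * Complex.sin θ := by
      rw [show ((k:ℂ)+1)*θ = ((k:ℂ)+2)*θ - θ by ring, Complex.sin_sub]
    have hI := Complex.I_sq
    have c0 : ((k+1 : ℕ) : ℂ) = (k:ℂ)+1 := by push_cast; ring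
    have c1 : ((k+1+1 : ℕ) : ℂ) = (k:ℂ)+2 := by push_cast; ring
    have c3 : ((k+2+1 : ℕ) : ℂ) = (k:ℂ)+3 := by push_cast; ring
    rw [c0] at e0
    rw [c1] at e1
    rw [c3]
    linear_combination (2*Complex.I*Complex.cos θ) * e1 + e0 + Complex.I^k * hs1
      - Complex.I^(k+2) * hs3
      + (Complex.I^k * (Complex.cos θ * Complex.sin (((k:ℂ)+2)*θ)
          - Complex.cos (((k:ℂ)+2)*θ) * Complex.sin θ)) * hI

lemma fibP_root (m j : ℕ) (hj : j ∈ Finset.range (m-1)) :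
    fibP (2 * Complex.I * ((Real.cos (((j:ℝ)+1) * Real.pi / m)) : ℂ)) m = 0 := by
  have hjm : j < m - 1 := Finset.mem_range.mp hj
  obtain ⟨m, rfl⟩ : ∃ m', m = m'+1 := ⟨m-1, by omega⟩
  have hjm' : j + 1 < m + 1 := by omega
  set r : ℝ := ((j:ℝ)+1) * Real.pi / ((m+1:ℕ):ℝ) with hr
  have key := fibP_trig (r : ℂ) m
  rw [Complex.ofReal_cos]
  -- the angle (m+1) * r equals (j+1) * π
  have hmr : ((m+1:ℕ):ℂ) * (r:ℂ) = (((((j:ℕ)+1:ℕ)) * Real.pi : ℝ) : ℂ) := by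
    have : ((m+1:ℕ):ℝ) * r = ((j+1:ℕ):ℝ) * Real.pi := by
      rw [hr]; field_simp; norm_num
    push_cast at this ⊢
    exact_mod_cast congrArg (Complex.ofReal) this
  rw [hmr] at key
  have hz : Complex.sin ((((j+1:ℕ)) * Real.pi : ℝ) : ℂ) = 0 := by
    rw [← Complex.ofReal_sin]
    exact_mod_cast congrArg Complex.ofReal (Real.sin_nat_mul_pi (j+1))
  rw [hz, mul_zero] at key
  have hsin : Complex.sin (r : ℂ) ≠ 0 := by
    rw [← Complex.ofReal_sin]
    simp only [ne_eq, Complex.ofReal_eq_zero]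
    refine ne_of_gt (Real.sin_pos_of_pos_of_lt_pi ?_ ?_)
    · apply div_pos (mul_pos (by positivity) Real.pi_pos)
      exact_mod_cast Nat.succ_pos m
    · rw [hr, div_lt_iff₀ (by exact_mod_cast Nat.succ_pos m)]
      have : (1:ℝ) ≤ ((m+1:ℕ):ℝ) := by exact_mod_cast Nat.one_le_iff_ne_zero.mpr (by omega)
      nlinarith [Real.pi_pos, (show ((j:ℝ)+1) < ((m+1:ℕ):ℝ) by exact_mod_cast hjm')]
  have := mul_eq_zero.mp key
  tauto

noncomputable def rho (m j : ℕ) : ℂ :=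
  2 * Complex.I * ((Real.cos (((j:ℝ)+1) * Real.pi / m)) : ℂ)

lemma rho_injOn (m : ℕ) : Set.InjOn (rho m) (Finset.range (m-1)) := by
  intro a ha b hb hab
  simp only [Finset.coe_range, Set.mem_Iio] at ha hb
  have hm : 0 < m := by omega
  have h2I : (2 * Complex.I : ℂ) ≠ 0 := by simp [Complex.I_ne_zero]
  have hc : ((Real.cos (((a:ℝ)+1) * Real.pi / m) : ℝ) : ℂ)
      = ((Real.cos (((b:ℝ)+1) * Real.pi / m) : ℝ) : ℂ) :=
    mul_left_cancel₀ h2I hab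
  have hc' : Real.cos (((a:ℝ)+1) * Real.pi / m) = Real.cos (((b:ℝ)+1) * Real.pi / m) := by
    exact_mod_cast hc
  have hmem : ∀ c : ℕ, c < m - 1 → ((c:ℝ)+1) * Real.pi / m ∈ Set.Icc 0 Real.pi := by
    intro c hcm
    constructor
    · positivity
    · rw [div_le_iff₀ (by exact_mod_cast hm)]
      have : ((c:ℝ)+1) ≤ (m:ℝ) := by exact_mod_cast by omega
      nlinarith [Real.pi_pos]
  have := Real.injOn_cos (hmem a ha) (hmem b hb) hc'
  have hπ := Real.pi_ne_zero
  have hm' : (m:ℝ) ≠ 0 := by exact_mod_cast hm.ne'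
  field_simp at this
  exact_mod_cast (by linarith : (a:ℝ) = b)

lemma fibQ_eq_prod (m : ℕ) (hm : 1 ≤ m) :
    fibQ m = ∏ j ∈ Finset.range (m-1), (Polynomial.X - Polynomial.C (rho m j)) := by
  set g : Polynomial ℂ := ∏ j ∈ Finset.range (m-1), (Polynomial.X - Polynomial.C (rho m j))
    with hg
  have hgm : g.Monic := monic_prod_of_monic _ _ (fun j _ => monic_X_sub_C _)
  have hgd : g.natDegree = m - 1 := by
    rw [hg, natDegree_prod_of_monic _ _ (fun j _ => monic_X_sub_C _)]
    simp
  obtain ⟨hfm, hfd⟩ : (fibQ m).Monic ∧ (fibQ m).natDegree = m - 1 := by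
    obtain ⟨m', rfl⟩ : ∃ m', m = m' + 1 := ⟨m-1, by omega⟩
    simpa using fibQ_monic m'
  by_contra hne
  have hsub : fibQ m - g ≠ 0 := sub_ne_zero.mpr hne
  have hdeg : (fibQ m - g).degree < (fibQ m).degree :=
    degree_sub_lt (by rw [degree_eq_natDegree hfm.ne_zero, degree_eq_natDegree hgm.ne_zero,
      hfd, hgd]) hfm.ne_zero (by rw [hfm.leadingCoeff, hgm.leadingCoeff])
  have hndeg : (fibQ m - g).natDegree < m - 1 := by
    have := (natDegree_lt_iff_degree_lt hsub).mpr
      (hdeg.trans_le (by rw [degree_eq_natDegree hfm.ne_zero, hfd]))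
    exact this
  set s : Finset ℂ := (Finset.range (m-1)).image (rho m) with hs
  have hcard : s.card = m - 1 := by
    rw [hs, Finset.card_image_of_injOn (rho_injOn m), Finset.card_range]
  have heval : ∀ z ∈ s, (fibQ m - g).eval z = 0 := by
    intro z hz
    rw [hs, Finset.mem_image] at hz
    obtain ⟨j, hjm, rfl⟩ := hz
    have h0 : fibP (rho m j) m = 0 := fibP_root m j hjm
    rw [Polynomial.eval_sub, fibQ_eval, h0, hg, Polynomial.eval_prod,
      Finset.prod_eq_zero hjm (by simp)]
    ring
  exact hsub (Polynomial.eq_zero_of_natDegree_lt_card_of_eval_eq_zero' _ s heval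
    (by rw [hcard]; exact hndeg))

lemma fibP_eq_prod (m : ℕ) (hm : 1 ≤ m) (x : ℂ) :
    fibP x m = ∏ j ∈ Finset.range (m-1),
      (x - 2 * Complex.I * ((Real.cos (((j:ℝ)+1) * Real.pi / m)) : ℂ)) := by
  have := congrArg (Polynomial.eval x) (fibQ_eq_prod m hm)
  rw [fibQ_eval, Polynomial.eval_prod] at this
  simpa [rho] using this


/-- For `n ≥ 2` and `x : ℂ`,
`(x² + 4)·F_{n-1}(x) = ∏_{k=1}^{n} (x + 2i·cos((k-1)π/(n-1)))`; equivalently,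
if `x² + 4 ≠ 0` then `F_{n-1}(x) = (1/(x²+4))·∏_{k=1}^{n} (x + 2i·cos((k-1)π/(n-1)))`. -/
theorem fibP_complex_factorization (n : ℕ) (hn : 2 ≤ n) (x : ℂ) :
    ((x ^ 2 + 4) * fibP x (n - 1) =
        ∏ k ∈ Finset.Icc 1 n,
          (x + 2 * Complex.I *
            (Real.cos (((k : ℝ) - 1) * Real.pi / ((n : ℝ) - 1)) : ℂ))) ∧
      (x ^ 2 + 4 ≠ 0 →
        fibP x (n - 1) =
          (1 / (x ^ 2 + 4)) *
            ∏ k ∈ Finset.Icc 1 n,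
              (x + 2 * Complex.I *
                (Real.cos (((k : ℝ) - 1) * Real.pi / ((n : ℝ) - 1)) : ℂ))) := by
  obtain ⟨p, rfl⟩ : ∃ p, n = p + 2 := ⟨n-2, by omega⟩
  set G : ℕ → ℂ := fun i =>
    x + 2 * Complex.I * ((Real.cos ((i:ℝ) * Real.pi / ((p:ℝ)+1))) : ℂ) with hG
  have key : (x ^ 2 + 4) * fibP x (p + 2 - 1) =
      ∏ k ∈ Finset.Icc 1 (p+2),
        (x + 2 * Complex.I *
          (Real.cos (((k : ℝ) - 1) * Real.pi / (((p+2:ℕ) : ℝ) - 1)) : ℂ)) := by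
    have h1 : ∏ k ∈ Finset.Icc 1 (p+2),
        (x + 2 * Complex.I *
          (Real.cos (((k : ℝ) - 1) * Real.pi / (((p+2:ℕ) : ℝ) - 1)) : ℂ))
        = ∏ i ∈ Finset.range (p+2), G i := by
      rw [← Finset.Ico_add_one_right_eq_Icc, Finset.prod_Ico_eq_prod_range]
      apply Finset.prod_congr (by norm_num)
      intro i _
      rw [hG]
      norm_num
      push_cast
      ring_nf
    rw [h1, Finset.prod_range_succ, Finset.prod_range_succ']
    have hG0 : G 0 = x + 2 * Complex.I := by
      rw [hG]; norm_num
    have hGtop : G (p+1) = x - 2 * Complex.I := by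
      have harg : ((p+1:ℕ):ℝ) * Real.pi / ((p:ℝ)+1) = Real.pi := by
        have hp : ((p:ℝ)+1) ≠ 0 := by positivity
        push_cast
        field_simp
      simp only [hG]
      rw [harg, Real.cos_pi]
      push_cast
      ring
    have hmid : ∏ i ∈ Finset.range p, G (i+1) = fibP x (p+1) := by
      rw [fibP_eq_prod (p+1) (by omega) x]
      rw [← Finset.prod_range_reflect]
      apply Finset.prod_congr (by norm_num)
      intro j hj
      have hj' : j < p := Finset.mem_range.mp hj
      simp only [hG]
      have hc : ((p - 1 - j + 1 : ℕ) : ℝ) = (p:ℝ) - j := by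
        have : p - 1 - j + 1 = p - j := by omega
        rw [this, Nat.cast_sub (by omega)]
      rw [hc]
      have hang : ((p:ℝ) - j) * Real.pi / ((p:ℝ)+1)
          = Real.pi - ((j:ℝ)+1) * Real.pi / ((p:ℝ)+1) := by
        field_simp
        ring
      rw [hang, Real.cos_pi_sub]
      push_cast
      ring
    rw [hmid, hG0, hGtop]
    have : fibP x (p + 2 - 1) = fibP x (p+1) := by norm_num
    rw [this]
    linear_combination (4 * fibP x (p+1)) * Complex.I_sq
  refine ⟨key, fun h => ?_⟩
  rw [← key]
  field_simp
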